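/- arXiv:1502.07264 — 4 statements merged into one kernel-verified Lean document; each statement's English description precedes it below -/
import Mathlib

section
/- Let {u_k}_{k≥0} be a sequence of nonnegative reals satisfying u_k ≤ μ^k u_0 + A Σ_{j=0}^{k-1} μ^j u_{k-1-j}^2 for all k ≥ 1, where 0 < μ < 1 and A > 0. Then there exist positive constants η₀ and η such that if 0 ≤ u_0 ≤ η₀, then u_k ≤ η μ^k for all k ≥ 0. -/
/-- Nonlinear discrete stability lemma: a nonnegative sequence satisfying a
geometric-plus-quadratic recursive bound decays geometrically, provided the
initial value is small enough. -/
theorem nonlinear_discrete_stability (μ A : ℝ) (hμ0 : 0 < μ) (hμ1 : μ < 1) (hA : 0 < A) :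
    ∃ η₀ > (0 : ℝ), ∃ η > (0 : ℝ), ∀ u : ℕ → ℝ,
      (∀ k, 0 ≤ u k) →
      (∀ k : ℕ, 1 ≤ k →
        u k ≤ μ ^ k * u 0 + A * ∑ j ∈ Finset.range k, μ ^ j * (u (k - 1 - j)) ^ 2) →
      u 0 ≤ η₀ → ∀ k, u k ≤ η * μ ^ k := by
  have h1μ : 0 < 1 - μ := by linarith
  set η : ℝ := μ * (1 - μ) / (2 * A) with hηdef
  have hηpos : 0 < η := by positivity
  refine ⟨η / 2, by positivity, η, hηpos, ?_⟩
  intro u hu hrec hu0 k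
  induction k using Nat.strong_induction_on with
  | _ k ih =>
    match k with
    | 0 => simpa using by linarith
    | (k + 1) =>
      have h1 := hrec (k + 1) (by omega)
      -- termwise bound
      have hterm : ∀ j ∈ Finset.range (k + 1),
          μ ^ j * (u (k + 1 - 1 - j)) ^ 2 ≤ η ^ 2 * μ ^ k * μ ^ (k - j) := by
        intro j hj
        simp only [Finset.mem_range] at hj
        have hjk : j ≤ k := by omega
        have huj : u (k - j) ≤ η * μ ^ (k - j) := ih (k - j) (by omega)
        have h0 : 0 ≤ u (k - j) := hu _
        have hμp : (0:ℝ) ≤ μ ^ (k - j) := pow_nonneg hμ0.le _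
        have hsq : (u (k - j)) ^ 2 ≤ (η * μ ^ (k - j)) ^ 2 := by nlinarith
        have hk1 : k + 1 - 1 - j = k - j := by omega
        rw [hk1]
        calc μ ^ j * (u (k - j)) ^ 2 ≤ μ ^ j * (η * μ ^ (k - j)) ^ 2 :=
              mul_le_mul_of_nonneg_left hsq (pow_nonneg hμ0.le j)
          _ = η ^ 2 * (μ ^ j * μ ^ (k - j)) * μ ^ (k - j) := by ring
          _ = η ^ 2 * μ ^ k * μ ^ (k - j) := by
              rw [← pow_add, Nat.add_sub_cancel' hjk]
      have hsum1 : ∑ j ∈ Finset.range (k + 1), μ ^ j * (u (k + 1 - 1 - j)) ^ 2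
          ≤ η ^ 2 * μ ^ k * ∑ j ∈ Finset.range (k + 1), μ ^ (k - j) := by
        rw [Finset.mul_sum]
        exact Finset.sum_le_sum hterm
      have hreflect : ∑ j ∈ Finset.range (k + 1), μ ^ (k - j)
          = ∑ j ∈ Finset.range (k + 1), μ ^ j := by
        have := Finset.sum_range_reflect (fun i => μ ^ i) (k + 1)
        simpa using this
      have hgeom : ∑ j ∈ Finset.range (k + 1), μ ^ j ≤ 1 / (1 - μ) := by
        rw [geom_sum_eq (by linarith : μ ≠ 1)]
        have heq : (μ ^ (k + 1) - 1) / (μ - 1) = (1 - μ ^ (k + 1)) / (1 - μ) := by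
          rw [div_eq_div_iff (by linarith) (by linarith)]; ring
        rw [heq]
        have : (0:ℝ) ≤ μ ^ (k + 1) := pow_nonneg hμ0.le _
        gcongr
        linarith
      have hsum2 : ∑ j ∈ Finset.range (k + 1), μ ^ j * (u (k + 1 - 1 - j)) ^ 2
          ≤ η ^ 2 * μ ^ k * (1 / (1 - μ)) := by
        calc _ ≤ η ^ 2 * μ ^ k * ∑ j ∈ Finset.range (k + 1), μ ^ (k - j) := hsum1
          _ ≤ η ^ 2 * μ ^ k * (1 / (1 - μ)) := by
              rw [hreflect]
              exact mul_le_mul_of_nonneg_left hgeom (by positivity)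
      have hkey : A * (η ^ 2 * μ ^ k * (1 / (1 - μ))) = η / 2 * (μ * μ ^ k) := by
        rw [hηdef]; field_simp
      have hμk : (0:ℝ) < μ ^ k := pow_pos hμ0 _
      have hμk1 : (0:ℝ) < μ ^ (k + 1) := pow_pos hμ0 _
      have hu0' : μ ^ (k + 1) * u 0 ≤ μ ^ (k + 1) * (η / 2) :=
        mul_le_mul_of_nonneg_left hu0 hμk1.le
      calc u (k + 1) ≤ μ ^ (k + 1) * u 0 +
            A * ∑ j ∈ Finset.range (k + 1), μ ^ j * (u (k + 1 - 1 - j)) ^ 2 := h1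
        _ ≤ μ ^ (k + 1) * (η / 2) + A * (η ^ 2 * μ ^ k * (1 / (1 - μ))) := by
            have := mul_le_mul_of_nonneg_left hsum2 hA.le
            linarith
        _ = η * μ ^ (k + 1) := by
            rw [hkey, pow_succ]; ring
end

section
/- For fixed η > 0, set f(ξ) = ξ·exp(−Aξ/(μ(1−μ))) and η₀ = f(η). If a nonnegative sequence {u_k} satisfies u_k ≤ μ^k u_0 + A Σ_{j=0}^{k-1} μ^j u_{k-1-j}^2 for k ≥ 1 with u_0 ≤ η₀, then u_k ≤ η μ^k for all k. -/
private lemma prod_one_add_eq (a : ℕ → ℝ) :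
    ∀ n, ∏ m ∈ Finset.range n, (1 + a m)
      = 1 + ∑ m ∈ Finset.range n, a m * ∏ i ∈ Finset.range m, (1 + a i) := by
  intro n
  induction n with
  | zero => simp
  | succ n ih =>
    rw [Finset.prod_range_succ, Finset.sum_range_succ, ih]
    ring

/-- Quantitative nonlinear Gronwall-type lemma: with `f ξ = ξ exp (-A ξ / (μ (1 - μ)))`
and `η₀ = f η`, if `u 0 ≤ η₀` then `u k ≤ η μ^k` for all `k`. -/
theorem nonlinear_discrete_stability_quantitative (μ A η : ℝ)
    (hμ0 : 0 < μ) (hμ1 : μ < 1) (hA : 0 < A) (hη : 0 < η)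
    (u : ℕ → ℝ) (hpos : ∀ k, 0 ≤ u k)
    (hrec : ∀ k : ℕ, 1 ≤ k →
      u k ≤ μ ^ k * u 0 + A * ∑ j ∈ Finset.range k, μ ^ j * (u (k - 1 - j)) ^ 2)
    (h0 : u 0 ≤ η * Real.exp (-(A * η) / (μ * (1 - μ)))) :
    ∀ k, u k ≤ η * μ ^ k := by
  have hμ1' : 0 < 1 - μ := by linarith
  have hu0 : 0 ≤ u 0 := hpos 0
  set a : ℕ → ℝ := fun m => A * η / μ * μ ^ m with ha_def
  have ha_nonneg : ∀ m, 0 ≤ a m := by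
    intro m; simp only [ha_def]; positivity
  set P : ℕ → ℝ := fun n => ∏ m ∈ Finset.range n, (1 + a m) with hP_def
  have hP_pos : ∀ n, 0 < P n := by
    intro n
    exact Finset.prod_pos (fun m _ => by linarith [ha_nonneg m])
  have hP_rec : ∀ n, P n = 1 + ∑ m ∈ Finset.range n, a m * P m := fun n =>
    prod_one_add_eq a n
  have hCbd : ∀ n, P n ≤ Real.exp (A * η / (μ * (1 - μ))) := by
    intro n
    have h1 : P n ≤ Real.exp (∑ m ∈ Finset.range n, a m) := by
      rw [Real.exp_sum]
      exact Finset.prod_le_prod (fun m _ => by linarith [ha_nonneg m])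
        (fun m _ => by linarith [Real.add_one_le_exp (a m)])
    have hg : ∑ m ∈ Finset.range n, μ ^ m ≤ 1 / (1 - μ) := by
      rw [le_div_iff₀ hμ1']
      nlinarith [pow_nonneg hμ0.le n, geom_sum_mul μ n]
    have h2 : ∑ m ∈ Finset.range n, a m ≤ A * η / (μ * (1 - μ)) := by
      simp only [ha_def]
      rw [← Finset.mul_sum]
      have : A * η / (μ * (1 - μ)) = (A * η / μ) * (1 / (1 - μ)) := by
        field_simp
      rw [this]
      exact mul_le_mul_of_nonneg_left hg (by positivity)
    exact h1.trans (Real.exp_le_exp.mpr h2)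
  have hkey : ∀ m, u 0 * P m ≤ η := by
    intro m
    calc u 0 * P m
        ≤ (η * Real.exp (-(A * η) / (μ * (1 - μ)))) * Real.exp (A * η / (μ * (1 - μ))) :=
          mul_le_mul h0 (hCbd m) (hP_pos m).le (by positivity)
      _ = η := by
          rw [mul_assoc, ← Real.exp_add]
          have : -(A * η) / (μ * (1 - μ)) + A * η / (μ * (1 - μ)) = 0 := by ring
          rw [this, Real.exp_zero, mul_one]
  have main : ∀ k, u k ≤ u 0 * P k * μ ^ k := by
    intro k
    induction k using Nat.strong_induction_on with
    | _ k ih =>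
      rcases Nat.eq_zero_or_pos k with hk | hk
      · subst hk
        have hP0 : P 0 = 1 := by simp [hP_def]
        rw [hP0]; simp
      · have hterm : ∀ j ∈ Finset.range k, A * (μ ^ j * u (k - 1 - j) ^ 2)
            ≤ u 0 * μ ^ k * (a (k - 1 - j) * P (k - 1 - j)) := by
          intro j hj
          rw [Finset.mem_range] at hj
          set m := k - 1 - j with hm_def
          have hmk : m < k := by omega
          have hkeq : k = j + m + 1 := by omega
          have h1 : u m ≤ u 0 * P m * μ ^ m := ih m hmk
          have h2 : u m ≤ η * μ ^ m :=
            h1.trans (mul_le_mul_of_nonneg_right (hkey m) (pow_nonneg hμ0.le m))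
          have hsq : u m ^ 2 ≤ (u 0 * P m * μ ^ m) * (η * μ ^ m) := by
            rw [sq]
            exact mul_le_mul h1 h2 (hpos m)
              (mul_nonneg (mul_nonneg hu0 (hP_pos m).le) (pow_nonneg hμ0.le m))
          have h3 : A * (μ ^ j * u m ^ 2)
              ≤ A * (μ ^ j * ((u 0 * P m * μ ^ m) * (η * μ ^ m))) := by
            apply mul_le_mul_of_nonneg_left _ hA.le
            exact mul_le_mul_of_nonneg_left hsq (pow_nonneg hμ0.le j)
          refine h3.trans (le_of_eq ?_)
          simp only [ha_def]
          rw [hkeq]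
          rw [pow_add, pow_add]
          field_simp
        calc u k
            ≤ μ ^ k * u 0 + A * ∑ j ∈ Finset.range k, μ ^ j * u (k - 1 - j) ^ 2 :=
              hrec k hk
          _ ≤ μ ^ k * u 0
              + ∑ j ∈ Finset.range k, u 0 * μ ^ k * (a (k - 1 - j) * P (k - 1 - j)) := by
              rw [Finset.mul_sum]
              exact add_le_add_right (Finset.sum_le_sum hterm) _
          _ = μ ^ k * u 0 + ∑ m ∈ Finset.range k, u 0 * μ ^ k * (a m * P m) := by
              rw [Finset.sum_range_reflect (fun m => u 0 * μ ^ k * (a m * P m)) k]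
          _ = u 0 * P k * μ ^ k := by
              rw [hP_rec k, ← Finset.mul_sum]
              ring
  intro k
  exact (main k).trans (mul_le_mul_of_nonneg_right (hkey k) (pow_nonneg hμ0.le k))
end

section
/- Let f : [0,1] → [0,1] be C², F = max_{x∈[0,1]} |f′(x)| > 1, and Γ a connected graph whose normalized Laplacian has positive eigenvalues λ_2 ≤ ... ≤ λ_n satisfying λ_n/λ_2 < 1 + 1/F. Then for any ε ∈ (λ_2^{-1}(1 − 1/F), λ_n^{-1}(1 + 1/F)), the diagonal (synchronous) subspace D = span{1_n} is locally asymptotically stable for the coupled map system x_{k+1} = (I − εL) f(x_k) (applied componentwise): there exists δ > 0 such that dist(x_0, D) < δ implies dist(x_k, D) → 0 as k → ∞. -/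
open Matrix

private lemma wsum_key {n : ℕ} (d y : Fin n → ℝ) (hd : (∑ i, d i) ≠ 0) :
    ∑ i, d i * (y i - (∑ i, d i * y i) / (∑ i, d i)) = 0 := by
  have : ∑ i, d i * (y i - (∑ i, d i * y i) / (∑ i, d i))
      = (∑ i, d i * y i) - (∑ i, d i) * ((∑ i, d i * y i) / (∑ i, d i)) := by
    rw [Finset.sum_mul]
    rw [← Finset.sum_sub_distrib]
    exact Finset.sum_congr rfl fun i _ => by ring
  rw [this, mul_div_cancel₀ _ hd, sub_self]

private lemma wproj {n : ℕ} (d y : Fin n → ℝ) (hd : 0 < ∑ i, d i) (c : ℝ) :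
    ∑ i, d i * (y i - (∑ i, d i * y i) / (∑ i, d i)) ^ 2 ≤ ∑ i, d i * (y i - c) ^ 2 := by
  set m := (∑ i, d i * y i) / (∑ i, d i) with hm
  have key : ∑ i, d i * (y i - m) = 0 := wsum_key d y hd.ne'
  have expand : ∑ i, d i * (y i - c) ^ 2
      = ∑ i, d i * (y i - m) ^ 2 + (2 * (m - c)) * ∑ i, d i * (y i - m)
        + (c - m) ^ 2 * ∑ i, d i := by
    rw [Finset.mul_sum, Finset.mul_sum, ← Finset.sum_add_distrib, ← Finset.sum_add_distrib]
    exact Finset.sum_congr rfl fun i _ => by ring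
  have hnn : 0 ≤ (c - m) ^ 2 * ∑ i, d i := mul_nonneg (sq_nonneg _) hd.le
  rw [expand, key]
  linarith

private lemma lip_of_deriv_bound (f : ℝ → ℝ) (hf : ContDiffOn ℝ 2 f (Set.Icc 0 1))
    (F : ℝ) (hF : ∀ t ∈ Set.Icc (0:ℝ) 1, |deriv f t| ≤ F) :
    ∀ a ∈ Set.Icc (0:ℝ) 1, ∀ b ∈ Set.Icc (0:ℝ) 1, |f b - f a| ≤ F * |b - a| := by
  have hdiff : DifferentiableOn ℝ f (Set.Icc 0 1) := hf.differentiableOn two_ne_zero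
  have hdc : ContinuousOn (derivWithin f (Set.Icc 0 1)) (Set.Icc 0 1) :=
    hf.continuousOn_derivWithin (uniqueDiffOn_Icc one_pos) one_le_two
  have hIoo : ∀ t ∈ Set.Ioo (0:ℝ) 1, |derivWithin f (Set.Icc 0 1) t| ≤ F := by
    intro t ht
    rw [derivWithin_of_mem_nhds (Icc_mem_nhds ht.1 ht.2)]
    exact hF t (Set.Ioo_subset_Icc_self ht)
  have hbound : ∀ t ∈ Set.Icc (0:ℝ) 1, ‖derivWithin f (Set.Icc 0 1) t‖ ≤ F := by
    intro t ht
    have hcl : t ∈ closure (Set.Ioo (0:ℝ) 1) := by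
      rw [closure_Ioo (by norm_num : (0:ℝ) ≠ 1)]; exact ht
    have hne : (nhdsWithin t (Set.Ioo (0:ℝ) 1)).NeBot := mem_closure_iff_nhdsWithin_neBot.1 hcl
    have hc : Filter.Tendsto (fun u => |derivWithin f (Set.Icc 0 1) u|)
        (nhdsWithin t (Set.Ioo (0:ℝ) 1)) (nhds (|derivWithin f (Set.Icc 0 1) t|)) :=
      ((hdc t ht).mono Set.Ioo_subset_Icc_self).abs
    rw [Real.norm_eq_abs]
    exact le_of_tendsto hc (Filter.eventually_of_mem self_mem_nhdsWithin hIoo)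
  intro a ha b hb
  have := (convex_Icc (0:ℝ) 1).norm_image_sub_le_of_norm_derivWithin_le hdiff hbound ha hb
  simpa [Real.norm_eq_abs] using this

private lemma ker_const {n : ℕ} (G : SimpleGraph (Fin n)) [DecidableRel G.Adj]
    (hconn : G.Connected) (v : Fin n → ℝ)
    (heq : ∀ i, (G.degree i : ℝ) * v i = ∑ j ∈ G.neighborFinset i, v j) :
    ∀ i j, v i = v j := by
  intro i j
  have hne : (Finset.univ : Finset (Fin n)).Nonempty := ⟨i, Finset.mem_univ i⟩
  obtain ⟨i₀, -, hmax⟩ := Finset.exists_max_image Finset.univ v hne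
  suffices h : ∀ k, v k = v i₀ by rw [h i, h j]
  have step : ∀ a b : Fin n, G.Adj a b → v a = v i₀ → v b = v i₀ := by
    intro a b hab ha
    have hsum : ∑ k ∈ G.neighborFinset a, v k = ∑ k ∈ G.neighborFinset a, v i₀ := by
      rw [Finset.sum_const, SimpleGraph.card_neighborFinset_eq_degree, nsmul_eq_mul,
        ← heq a, ha]
    have hall := (Finset.sum_eq_sum_iff_of_le
      (fun k _ => hmax k (Finset.mem_univ k))).1 hsum
    have hb : b ∈ G.neighborFinset a := (SimpleGraph.mem_neighborFinset G a b).2 hab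
    exact hall b hb
  have walkprop : ∀ (a b : Fin n) (w : G.Walk a b), v a = v i₀ → v b = v i₀ := by
    intro a b w
    induction w with
    | nil => exact id
    | cons h p ih => intro ha; exact ih (step _ _ h ha)
  exact fun k => (hconn.preconnected i₀ k).elim fun w => walkprop i₀ k w rfl

private lemma specbound {n : ℕ} (S : Matrix (Fin n) (Fin n) ℝ) (hS : S.IsHermitian)
    (hSt : Sᵀ = S) (u₀ : Fin n → ℝ)
    (hker : ∀ w : Fin n → ℝ, S *ᵥ w = 0 → ∃ t : ℝ, w = t • u₀)
    (γ ε : ℝ)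
    (hbound : ∀ μ : ℝ, μ ≠ 0 → (∃ w : Fin n → ℝ, w ≠ 0 ∧ S *ᵥ w = μ • w) →
      (1 - ε * μ) ^ 2 ≤ γ ^ 2)
    (u : Fin n → ℝ) (hu : ∑ i, u₀ i * u i = 0) :
    ∑ i, (u i - ε * (S *ᵥ u) i) ^ 2 ≤ γ ^ 2 * ∑ i, u i ^ 2 := by
  classical
  set b := hS.eigenvectorBasis with hb
  set lam := hS.eigenvalues with hlam
  set U : EuclideanSpace ℝ (Fin n) := (WithLp.equiv 2 (Fin n → ℝ)).symm u with hU
  set T : Fin n → ℝ := fun i => u i - ε * (S *ᵥ u) i with hT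
  set TU : EuclideanSpace ℝ (Fin n) := (WithLp.equiv 2 (Fin n → ℝ)).symm T with hTU
  have inner_eq : ∀ X Y : EuclideanSpace ℝ (Fin n), (inner ℝ X Y : ℝ) = ∑ i, X i * Y i := by
    intro X Y
    simp [PiLp.inner_apply, RCLike.inner_apply, starRingEnd_apply, mul_comm]
  -- repr coefficients
  have hreprU : ∀ i, b.repr U i = ∑ j, b i j * u j := by
    intro i
    rw [b.repr_apply_apply, inner_eq]
    rfl
  have hreprTU : ∀ i, b.repr TU i = (1 - ε * lam i) * b.repr U i := by
    intro i
    rw [b.repr_apply_apply, inner_eq]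
    have hdot : ∑ j, (b i) j * (S *ᵥ u) j = lam i * ∑ j, b i j * u j := by
      have h1 : ∑ j, (b i) j * (S *ᵥ u) j = (⇑(b i)) ⬝ᵥ (S *ᵥ u) := rfl
      rw [h1, dotProduct_mulVec, ← Matrix.mulVec_transpose, hSt,
        hS.mulVec_eigenvectorBasis, smul_dotProduct]
      rfl
    have h2 : ∀ j, (TU : EuclideanSpace ℝ (Fin n)) j = u j - ε * (S *ᵥ u) j := fun j => rfl
    calc ∑ j, (b i) j * TU j = ∑ j, ((b i) j * u j - ε * ((b i) j * (S *ᵥ u) j)) := by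
          exact Finset.sum_congr rfl fun j _ => by rw [h2 j]; ring
      _ = (∑ j, (b i) j * u j) - ε * ∑ j, (b i) j * (S *ᵥ u) j := by
          rw [Finset.sum_sub_distrib, Finset.mul_sum]
      _ = (1 - ε * lam i) * b.repr U i := by rw [hdot, hreprU i]; ring
  have hker0 : ∀ i, lam i = 0 → b.repr U i = 0 := by
    intro i hi
    have h0 : S *ᵥ ⇑(b i) = 0 := by
      rw [hS.mulVec_eigenvectorBasis]
      show lam i • _ = _
      rw [hi]; simp
    obtain ⟨t, ht⟩ := hker _ h0
    rw [hreprU i]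
    calc ∑ j, b i j * u j = ∑ j, t * (u₀ j * u j) := by
          refine Finset.sum_congr rfl fun j _ => ?_
          have hbij : b i j = t * u₀ j := congrFun ht j
          rw [hbij]; ring
      _ = t * ∑ j, u₀ j * u j := by rw [Finset.mul_sum]
      _ = 0 := by rw [hu, mul_zero]
  -- Parseval
  have parseval : ∀ (w : Fin n → ℝ),
      ∑ i, ((b.repr ((WithLp.equiv 2 (Fin n → ℝ)).symm w)) i) ^ 2 = ∑ i, w i ^ 2 := by
    intro w
    have := b.repr.inner_map_map ((WithLp.equiv 2 (Fin n → ℝ)).symm w)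
      ((WithLp.equiv 2 (Fin n → ℝ)).symm w)
    rw [inner_eq, inner_eq] at this
    calc ∑ i, ((b.repr ((WithLp.equiv 2 (Fin n → ℝ)).symm w)) i) ^ 2
        = ∑ i, ((b.repr ((WithLp.equiv 2 (Fin n → ℝ)).symm w)) i)
            * ((b.repr ((WithLp.equiv 2 (Fin n → ℝ)).symm w)) i) := by
          exact Finset.sum_congr rfl fun i _ => by ring
      _ = ∑ i, w i ^ 2 := by
          rw [this]
          exact Finset.sum_congr rfl fun i _ => by
            show w i * w i = w i ^ 2
            ring
  have key : ∑ i, (T i) ^ 2 ≤ γ ^ 2 * ∑ i, u i ^ 2 := by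
    rw [← parseval T, ← parseval u]
    have pointwise : ∀ i, (b.repr TU i) ^ 2 ≤ γ ^ 2 * (b.repr U i) ^ 2 := by
      intro i
      rw [hreprTU i]
      by_cases hzero : lam i = 0
      · rw [hker0 i hzero]; simp
      · have hev : ∃ w : Fin n → ℝ, w ≠ 0 ∧ S *ᵥ w = lam i • w := by
          refine ⟨⇑(b i), ?_, hS.mulVec_eigenvectorBasis i⟩
          intro hcontra
          exact b.orthonormal.ne_zero i (by ext j; exact congrFun hcontra j)
        have hle := hbound (lam i) hzero hev
        have : ((1 - ε * lam i) * b.repr U i) ^ 2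
            = (1 - ε * lam i) ^ 2 * (b.repr U i) ^ 2 := by ring
        rw [this]
        exact mul_le_mul_of_nonneg_right hle (sq_nonneg _)
    calc ∑ i, (b.repr TU i) ^ 2 ≤ ∑ i, γ ^ 2 * (b.repr U i) ^ 2 :=
          Finset.sum_le_sum fun i _ => pointwise i
      _ = γ ^ 2 * ∑ i, (b.repr U i) ^ 2 := by rw [Finset.mul_sum]
  exact key
/-- Synchronization theorem: if `f : [0,1] → [0,1]` is C², `F = max |f'| > 1`,
the nonzero eigenvalues of the normalized Laplacian of the connected graph `Γ`
satisfy `λ_n / λ_2 < 1 + 1/F`, and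
`ε ∈ (λ_2⁻¹ (1 - 1/F), λ_n⁻¹ (1 + 1/F))`, then the synchronous (diagonal)
subspace is locally asymptotically stable for `x_{k+1} = (I - εL) f(x_k)`:
there is `δ > 0` such that any trajectory starting within distance `δ` of the
diagonal converges to it. -/
theorem synchronization_sufficient_condition (n : ℕ) (hn : 2 ≤ n)
    (G : SimpleGraph (Fin n)) [DecidableRel G.Adj] (hconn : G.Connected)
    (L : Matrix (Fin n) (Fin n) ℝ)
    (hL : L = 1 - (Matrix.diagonal fun i => ((G.degree i : ℝ))⁻¹) * G.adjMatrix ℝ)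
    (f : ℝ → ℝ) (hf : ContDiffOn ℝ 2 f (Set.Icc 0 1))
    (hmaps : Set.MapsTo f (Set.Icc 0 1) (Set.Icc 0 1))
    (F : ℝ) (hF : IsGreatest ((fun t => |deriv f t|) '' Set.Icc (0 : ℝ) 1) F)
    (hF1 : 1 < F)
    (lam2 lamn : ℝ) (h2pos : 0 < lam2)
    (hlam2 : IsLeast {μ : ℝ | μ ≠ 0 ∧ ∃ v : Fin n → ℝ, v ≠ 0 ∧ L *ᵥ v = μ • v} lam2)
    (hlamn : IsGreatest {μ : ℝ | μ ≠ 0 ∧ ∃ v : Fin n → ℝ, v ≠ 0 ∧ L *ᵥ v = μ • v} lamn)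
    (hratio : lamn / lam2 < 1 + 1 / F)
    (ε : ℝ) (hε : ε ∈ Set.Ioo (lam2⁻¹ * (1 - 1 / F)) (lamn⁻¹ * (1 + 1 / F)))
    (D : Set (EuclideanSpace ℝ (Fin n)))
    (hD : D = Set.range fun c : ℝ => ((WithLp.toLp 2 fun _ => c) : EuclideanSpace ℝ (Fin n))) :
    ∃ δ > (0 : ℝ), ∀ x : ℕ → Fin n → ℝ,
      (∀ k i, x k i ∈ Set.Icc (0 : ℝ) 1) →
      (∀ k, x (k + 1) = (1 - ε • L) *ᵥ fun i => f (x k i)) →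
      Metric.infDist ((WithLp.equiv 2 (Fin n → ℝ)).symm (x 0)) D < δ →
      Filter.Tendsto (fun k => Metric.infDist ((WithLp.equiv 2 (Fin n → ℝ)).symm (x k)) D)
        Filter.atTop (nhds 0) := by
  classical
  have hne : (Finset.univ : Finset (Fin n)).Nonempty :=
    ⟨⟨0, by omega⟩, Finset.mem_univ _⟩
  -- degrees are positive
  have hdegpos : ∀ i, 0 < G.degree i := by
    intro i
    rw [SimpleGraph.degree_pos_iff_exists_adj]
    obtain ⟨j, hj⟩ := Fintype.exists_ne_of_one_lt_card (by simp; omega) i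
    obtain ⟨w⟩ := hconn.preconnected i j
    cases w with
    | nil => exact absurd rfl hj
    | cons h p => exact ⟨_, h⟩
  set d : Fin n → ℝ := fun i => (G.degree i : ℝ) with hddef
  have hdi : ∀ i, d i = (G.degree i : ℝ) := fun _ => rfl
  have hd : ∀ i, 0 < d i := fun i => by
    rw [hdi]; exact_mod_cast hdegpos i
  have hd1 : ∀ i, 1 ≤ d i := fun i => by
    rw [hdi]; exact_mod_cast hdegpos i
  set s : Fin n → ℝ := fun i => Real.sqrt (d i) with hsdef
  have hsi : ∀ i, s i = Real.sqrt (d i) := fun _ => rfl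
  have hs : ∀ i, 0 < s i := fun i => by rw [hsi]; exact Real.sqrt_pos.2 (hd i)
  have hss : ∀ i, s i ^ 2 = d i := fun i => by rw [hsi]; exact Real.sq_sqrt (hd i).le
  have hsd : ∀ i, s i * (d i)⁻¹ = (s i)⁻¹ := by
    intro i
    rw [← hss i, pow_two, mul_inv, ← mul_assoc, mul_inv_cancel₀ (hs i).ne', one_mul]
  -- L mulVec formula
  have hLmv : ∀ (v : Fin n → ℝ) (i : Fin n),
      (L *ᵥ v) i = v i - (d i)⁻¹ * ∑ j ∈ G.neighborFinset i, v j := by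
    intro v i
    rw [hL, Matrix.sub_mulVec, Matrix.one_mulVec, ← Matrix.mulVec_mulVec]
    simp only [Pi.sub_apply, Matrix.mulVec_diagonal, SimpleGraph.adjMatrix_mulVec_apply]
    rfl
  have hLapp : ∀ i j, L i j
      = (if i = j then (1:ℝ) else 0) - (d i)⁻¹ * (if G.Adj i j then 1 else 0) := by
    intro i j
    rw [hL, Matrix.sub_apply, Matrix.one_apply, Matrix.diagonal_mul,
      SimpleGraph.adjMatrix_apply, hdi]
  -- the symmetrized matrix
  set S : Matrix (Fin n) (Fin n) ℝ := Matrix.of (fun i j => s i * L i j * (s j)⁻¹) with hSdef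
  have hSapp : ∀ i j, S i j = s i * L i j * (s j)⁻¹ := fun i j => rfl
  have hSmv : ∀ (u : Fin n → ℝ) (i : Fin n),
      (S *ᵥ u) i = s i * (L *ᵥ fun j => (s j)⁻¹ * u j) i := by
    intro u i
    simp only [Matrix.mulVec, dotProduct, hSapp, Finset.mul_sum]
    exact Finset.sum_congr rfl fun j _ => by ring
  have hsymm : ∀ i j, S i j = S j i := by
    intro i j
    by_cases hij : i = j
    · subst hij; rfl
    · have e1 : S i j = -((s i)⁻¹ * (if G.Adj i j then (1:ℝ) else 0) * (s j)⁻¹) := by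
        rw [hSapp, hLapp, if_neg hij, ← hsd i]; ring
      have e2 : S j i = -((s j)⁻¹ * (if G.Adj j i then (1:ℝ) else 0) * (s i)⁻¹) := by
        rw [hSapp, hLapp, if_neg (Ne.symm hij), ← hsd j]; ring
      have hadj : (if G.Adj i j then (1:ℝ) else 0) = (if G.Adj j i then 1 else 0) := by
        simp [G.adj_comm]
      rw [e1, e2, hadj]; ring
  have hS : S.IsHermitian := Matrix.ext fun i j => by
    rw [Matrix.conjTranspose_apply, star_trivial]; exact hsymm j i
  have hSt : Sᵀ = S := Matrix.ext fun i j => by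
    rw [Matrix.transpose_apply]; exact hsymm j i
  -- step matrix basics
  have hEmv : ∀ (y : Fin n → ℝ) (i : Fin n),
      ((1 - ε • L) *ᵥ y) i = y i - ε * (L *ᵥ y) i := by
    intro y i
    rw [Matrix.sub_mulVec, Matrix.one_mulVec, Matrix.smul_mulVec]
    simp
  have hLconst : ∀ c : ℝ, L *ᵥ (fun _ => c) = 0 := by
    intro c; funext i
    rw [hLmv]
    simp only [Finset.sum_const, SimpleGraph.card_neighborFinset_eq_degree, nsmul_eq_mul,
      Pi.zero_apply]
    rw [show ((G.degree i : ℝ)) = d i from rfl, ← mul_assoc, inv_mul_cancel₀ (hd i).ne',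
      one_mul, sub_self]
  have hEconst : ∀ c : ℝ, (1 - ε • L) *ᵥ (fun _ => c) = fun _ => c := by
    intro c; funext i
    rw [hEmv, hLconst]
    simp
  -- spectral gap constants
  have hFpos : (0:ℝ) < F := lt_trans one_pos hF1
  have hFinv : (0:ℝ) < 1/F := by positivity
  have hlam2n : lam2 ≤ lamn := hlam2.2 hlamn.1
  have hnpos : 0 < lamn := lt_of_lt_of_le h2pos hlam2n
  have h11F : 0 < 1 - 1/F := by
    have : 1/F < 1 := by rw [div_lt_one hFpos]; exact hF1
    linarith
  have hεpos : 0 < ε :=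
    lt_trans (mul_pos (inv_pos.2 h2pos) h11F) hε.1
  have e2 : 1 - 1/F < ε * lam2 := by
    have h := mul_lt_mul_of_pos_right hε.1 h2pos
    have h' : lam2⁻¹ * (1 - 1/F) * lam2 = 1 - 1/F := by field_simp
    linarith
  have en : ε * lamn < 1 + 1/F := by
    have h := mul_lt_mul_of_pos_right hε.2 hnpos
    have h' : lamn⁻¹ * (1 + 1/F) * lamn = 1 + 1/F := by field_simp
    linarith
  have emono : ε * lam2 ≤ ε * lamn := mul_le_mul_of_nonneg_left hlam2n hεpos.le
  set γ : ℝ := max |1 - ε * lam2| |1 - ε * lamn| with hγdef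
  have habs2 : |1 - ε * lam2| < 1/F := by
    rw [abs_lt]; constructor <;> linarith
  have habsn : |1 - ε * lamn| < 1/F := by
    rw [abs_lt]; constructor <;> linarith
  have hγnn : 0 ≤ γ := le_trans (abs_nonneg _) (le_max_left _ _)
  have hγF : γ * F < 1 := by
    have hγlt : γ < 1/F := max_lt habs2 habsn
    calc γ * F < (1/F) * F := mul_lt_mul_of_pos_right hγlt hFpos
      _ = 1 := by field_simp
  -- eigenvalue bound hypothesis for specbound
  have hb : ∀ μ : ℝ, μ ≠ 0 → (∃ w : Fin n → ℝ, w ≠ 0 ∧ S *ᵥ w = μ • w) →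
      (1 - ε * μ) ^ 2 ≤ γ ^ 2 := by
    rintro μ hμ ⟨w, hw0, hw⟩
    have hvne : (fun j => (s j)⁻¹ * w j) ≠ (0 : Fin n → ℝ) := by
      intro hcontra
      apply hw0
      funext j
      have h := congrFun hcontra j
      rcases mul_eq_zero.1 h with h' | h'
      · exact absurd h' (inv_ne_zero (hs j).ne')
      · exact h'
    have hLV : L *ᵥ (fun j => (s j)⁻¹ * w j) = μ • (fun j => (s j)⁻¹ * w j) := by
      funext i
      have h1 : s i * (L *ᵥ fun j => (s j)⁻¹ * w j) i = μ * w i := by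
        have h := congrFun hw i
        rw [hSmv w i] at h
        exact h
      have hwv : w i = s i * ((s i)⁻¹ * w i) := by
        rw [← mul_assoc, mul_inv_cancel₀ (hs i).ne', one_mul]
      have h2 : s i * (L *ᵥ fun j => (s j)⁻¹ * w j) i = s i * (μ * ((s i)⁻¹ * w i)) := by
        rw [h1]
        have hcanc : s i * ((s i)⁻¹ * w i) = w i := by
          rw [← mul_assoc, mul_inv_cancel₀ (hs i).ne', one_mul]
        rw [show s i * (μ * ((s i)⁻¹ * w i)) = μ * (s i * ((s i)⁻¹ * w i)) from by ring, hcanc]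
      have h3 := mul_left_cancel₀ (hs i).ne' h2
      simpa using h3
    have hμmem : μ ∈ {μ : ℝ | μ ≠ 0 ∧ ∃ v : Fin n → ℝ, v ≠ 0 ∧ L *ᵥ v = μ • v} :=
      ⟨hμ, _, hvne, hLV⟩
    have hμ2 : lam2 ≤ μ := hlam2.2 hμmem
    have hμn : μ ≤ lamn := hlamn.2 hμmem
    have hub : 1 - ε * μ ≤ γ := by
      have h1 : ε * lam2 ≤ ε * μ := mul_le_mul_of_nonneg_left hμ2 hεpos.le
      have h2 : 1 - ε * lam2 ≤ |1 - ε * lam2| := le_abs_self _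
      have h3 : |1 - ε * lam2| ≤ γ := le_max_left _ _
      linarith
    have hlb : -γ ≤ 1 - ε * μ := by
      have h1 : ε * μ ≤ ε * lamn := mul_le_mul_of_nonneg_left hμn hεpos.le
      have h2 : ε * lamn - 1 ≤ |1 - ε * lamn| := by
        rw [abs_sub_comm]; exact le_abs_self _
      have h3 : |1 - ε * lamn| ≤ γ := le_max_right _ _
      linarith
    exact sq_le_sq' hlb hub
  -- kernel of S is spanned by s
  have hker : ∀ w : Fin n → ℝ, S *ᵥ w = 0 → ∃ t : ℝ, w = t • s := by
    intro w hw
    have hLv : ∀ i, (L *ᵥ fun j => (s j)⁻¹ * w j) i = 0 := by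
      intro i
      have h := congrFun hw i
      rw [hSmv w i] at h
      have h' : s i * (L *ᵥ fun j => (s j)⁻¹ * w j) i = 0 := h
      rcases mul_eq_zero.1 h' with h'' | h''
      · exact absurd h'' (hs i).ne'
      · exact h''
    have heq : ∀ i, (G.degree i : ℝ) * ((fun j => (s j)⁻¹ * w j) i)
        = ∑ j ∈ G.neighborFinset i, (s j)⁻¹ * w j := by
      intro i
      have h1 := hLv i
      rw [hLmv] at h1
      have h2 := sub_eq_zero.1 h1
      show (G.degree i : ℝ) * ((s i)⁻¹ * w i) = ∑ j ∈ G.neighborFinset i, (s j)⁻¹ * w j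
      calc (G.degree i : ℝ) * ((s i)⁻¹ * w i)
          = d i * ((d i)⁻¹ * ∑ j ∈ G.neighborFinset i, (s j)⁻¹ * w j) := by
            rw [hdi]; rw [h2]
        _ = ∑ j ∈ G.neighborFinset i, (s j)⁻¹ * w j := by
            rw [← mul_assoc, mul_inv_cancel₀ (hd i).ne', one_mul]
    have hconst := ker_const G hconn (fun j => (s j)⁻¹ * w j) heq
    refine ⟨(s (⟨0, by omega⟩ : Fin n))⁻¹ * w ⟨0, by omega⟩, ?_⟩
    funext j
    have h3 : (s j)⁻¹ * w j = (s (⟨0, by omega⟩ : Fin n))⁻¹ * w ⟨0, by omega⟩ :=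
      hconst j ⟨0, by omega⟩
    have h4 : w j = s j * ((s j)⁻¹ * w j) := by
      rw [← mul_assoc, mul_inv_cancel₀ (hs j).ne', one_mul]
    calc w j = s j * ((s j)⁻¹ * w j) := h4
      _ = s j * ((s (⟨0, by omega⟩ : Fin n))⁻¹ * w ⟨0, by omega⟩) := by rw [h3]
      _ = ((s (⟨0, by omega⟩ : Fin n))⁻¹ * w ⟨0, by omega⟩) • s j := by
          rw [smul_eq_mul]; ring
  -- the weighted contraction estimate
  have hA : ∀ v : Fin n → ℝ, (∑ i, d i * v i = 0) →
      ∑ i, d i * (((1 - ε • L) *ᵥ v) i)^2 ≤ γ^2 * ∑ i, d i * (v i)^2 := by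
    intro v hv
    have hu0 : ∑ i, s i * (s i * v i) = 0 := by
      rw [← hv]
      exact Finset.sum_congr rfl fun i _ => by rw [← hss i]; ring
    have hback : (fun j => (s j)⁻¹ * (s j * v j)) = v := by
      funext j; rw [← mul_assoc, inv_mul_cancel₀ (hs j).ne', one_mul]
    have hkey := specbound S hS hSt s hker γ ε hb (fun i => s i * v i) hu0
    have hsv : ∀ i, (S *ᵥ fun j => s j * v j) i = s i * (L *ᵥ v) i := by
      intro i
      rw [hSmv]
      rw [hback]
    have lhs_eq : ∀ i, s i * v i - ε * (S *ᵥ fun j => s j * v j) i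
        = s i * (((1 - ε • L) *ᵥ v) i) := by
      intro i
      rw [hsv i, hEmv]
      ring
    calc ∑ i, d i * (((1 - ε • L) *ᵥ v) i)^2
        = ∑ i, (s i * v i - ε * (S *ᵥ fun j => s j * v j) i)^2 := by
          refine Finset.sum_congr rfl fun i _ => ?_
          rw [lhs_eq i, mul_pow, hss i]
      _ ≤ γ^2 * ∑ i, (s i * v i)^2 := hkey
      _ = γ^2 * ∑ i, d i * (v i)^2 := by
          congr 1
          refine Finset.sum_congr rfl fun i _ => ?_
          rw [mul_pow, hss i]
  -- Lipschitz bound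
  have hlip : ∀ a ∈ Set.Icc (0:ℝ) 1, ∀ b ∈ Set.Icc (0:ℝ) 1, |f b - f a| ≤ F * |b - a| :=
    lip_of_deriv_bound f hf F (fun t ht => hF.2 ⟨t, ht, rfl⟩)
  -- total weight
  have hTpos : 0 < ∑ i, d i := Finset.sum_pos (fun i _ => hd i) hne
  -- one-step contraction for the weighted variance
  have hstep : ∀ x : Fin n → ℝ, (∀ i, x i ∈ Set.Icc (0:ℝ) 1) →
      (∑ i, d i * (((1 - ε • L) *ᵥ fun i => f (x i)) i
        - (∑ i, d i * ((1 - ε • L) *ᵥ fun i => f (x i)) i)/(∑ i, d i))^2)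
      ≤ (γ * F)^2 * ∑ i, d i * (x i - (∑ i, d i * x i)/(∑ i, d i))^2 := by
    intro x hx
    set c := (∑ i, d i * x i)/(∑ i, d i) with hcdef
    have hc0 : 0 ≤ c := div_nonneg
      (Finset.sum_nonneg fun i _ => mul_nonneg (hd i).le (hx i).1) hTpos.le
    have hc1 : c ≤ 1 := by
      rw [hcdef, div_le_one hTpos]
      exact Finset.sum_le_sum fun i _ => mul_le_of_le_one_right (hd i).le (hx i).2
    set g : Fin n → ℝ := fun i => f (x i) - f c with hgdef
    set a := (∑ i, d i * g i)/(∑ i, d i) with hadef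
    have hv0 : ∑ i, d i * (g i - a) = 0 := wsum_key d g hTpos.ne'
    have hdecomp : (fun i => f (x i)) = (fun _ : Fin n => f c + a) + (fun i => g i - a) := by
      funext i
      simp only [Pi.add_apply, hgdef]
      ring
    have hy : ((1 - ε • L) *ᵥ fun i => f (x i))
        = (fun _ : Fin n => f c + a) + ((1 - ε • L) *ᵥ fun i => g i - a) := by
      rw [hdecomp, Matrix.mulVec_add, hEconst]
    have h1 := wproj d ((1 - ε • L) *ᵥ fun i => f (x i)) hTpos (f c + a)
    have h2 : ∑ i, d i * (((1 - ε • L) *ᵥ fun i => f (x i)) i - (f c + a))^2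
        = ∑ i, d i * (((1 - ε • L) *ᵥ fun i => g i - a) i)^2 := by
      refine Finset.sum_congr rfl fun i _ => ?_
      rw [hy]
      simp only [Pi.add_apply]
      ring
    have h3 := hA (fun i => g i - a) hv0
    have h4 : ∑ i, d i * (g i - a)^2 ≤ ∑ i, d i * (g i)^2 := by
      have h := wproj d g hTpos 0
      simp only [sub_zero] at h
      rw [hadef]
      exact h
    have h5 : ∑ i, d i * (g i)^2 ≤ F^2 * ∑ i, d i * (x i - c)^2 := by
      rw [Finset.mul_sum]
      refine Finset.sum_le_sum fun i _ => ?_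
      have habs : |g i| ≤ F * |x i - c| := hlip c ⟨hc0, hc1⟩ (x i) (hx i)
      have hsq : (g i)^2 ≤ F^2 * (x i - c)^2 := by
        have h1' : (g i)^2 = |g i|^2 := (sq_abs _).symm
        have h2' : (F * |x i - c|)^2 = F^2 * (x i - c)^2 := by
          rw [mul_pow, sq_abs]
        rw [h1', ← h2']
        exact pow_le_pow_left₀ (abs_nonneg _) habs 2
      calc d i * (g i)^2 ≤ d i * (F^2 * (x i - c)^2) :=
            mul_le_mul_of_nonneg_left hsq (hd i).le
        _ = F^2 * (d i * (x i - c)^2) := by ring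
    calc (∑ i, d i * (((1 - ε • L) *ᵥ fun i => f (x i)) i
          - (∑ i, d i * ((1 - ε • L) *ᵥ fun i => f (x i)) i)/(∑ i, d i))^2)
        ≤ ∑ i, d i * (((1 - ε • L) *ᵥ fun i => f (x i)) i - (f c + a))^2 := h1
      _ = ∑ i, d i * (((1 - ε • L) *ᵥ fun i => g i - a) i)^2 := h2
      _ ≤ γ^2 * ∑ i, d i * (g i - a)^2 := h3
      _ ≤ γ^2 * ∑ i, d i * (g i)^2 := mul_le_mul_of_nonneg_left h4 (sq_nonneg _)
      _ ≤ γ^2 * (F^2 * ∑ i, d i * (x i - c)^2) := mul_le_mul_of_nonneg_left h5 (sq_nonneg _)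
      _ = (γ * F)^2 * ∑ i, d i * (x i - c)^2 := by ring
  -- conclusion
  refine ⟨1, one_pos, ?_⟩
  intro x hbox hrec _
  have hγFnn : 0 ≤ γ * F := mul_nonneg hγnn hFpos.le
  have hWk : ∀ k, (∑ i, d i * (x k i - (∑ i, d i * x k i)/(∑ i, d i))^2)
      ≤ ((γ * F)^2)^k * (∑ i, d i * (x 0 i - (∑ i, d i * x 0 i)/(∑ i, d i))^2) := by
    intro k
    induction k with
    | zero => simp
    | succ k ih =>
      have h1 := hrec k
      have h2 := hstep (x k) (fun i => hbox k i)
      rw [h1]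
      calc (∑ i, d i * (((1 - ε • L) *ᵥ fun i => f (x k i)) i
            - (∑ i, d i * ((1 - ε • L) *ᵥ fun i => f (x k i)) i)/(∑ i, d i))^2)
          ≤ (γ * F)^2 * ∑ i, d i * (x k i - (∑ i, d i * x k i)/(∑ i, d i))^2 := h2
        _ ≤ (γ * F)^2 * (((γ * F)^2)^k
              * ∑ i, d i * (x 0 i - (∑ i, d i * x 0 i)/(∑ i, d i))^2) :=
            mul_le_mul_of_nonneg_left ih (sq_nonneg _)
        _ = ((γ * F)^2)^(k+1) * ∑ i, d i * (x 0 i - (∑ i, d i * x 0 i)/(∑ i, d i))^2 := by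
            ring
  have hdist : ∀ k, Metric.infDist ((WithLp.equiv 2 (Fin n → ℝ)).symm (x k)) D
      ≤ Real.sqrt (∑ i, d i * (x k i - (∑ i, d i * x k i)/(∑ i, d i))^2) := by
    intro k
    set m := (∑ i, d i * x k i)/(∑ i, d i) with hmdef
    have hmem : ((WithLp.toLp 2 fun _ => m) : EuclideanSpace ℝ (Fin n)) ∈ D := by
      rw [hD]; exact ⟨m, rfl⟩
    have h1 := Metric.infDist_le_dist_of_mem hmem (x := (WithLp.equiv 2 (Fin n → ℝ)).symm (x k))
    have h2 : dist ((WithLp.equiv 2 (Fin n → ℝ)).symm (x k))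
        ((WithLp.toLp 2 fun _ => m) : EuclideanSpace ℝ (Fin n)) = Real.sqrt (∑ i, (x k i - m)^2) := by
      rw [EuclideanSpace.dist_eq]
      congr 1
      refine Finset.sum_congr rfl fun i _ => ?_
      rw [Real.dist_eq, sq_abs]
      rfl
    have h3 : Real.sqrt (∑ i, (x k i - m)^2)
        ≤ Real.sqrt (∑ i, d i * (x k i - m)^2) := by
      apply Real.sqrt_le_sqrt
      exact Finset.sum_le_sum fun i _ => le_mul_of_one_le_left (sq_nonneg _) (hd1 i)
    calc Metric.infDist ((WithLp.equiv 2 (Fin n → ℝ)).symm (x k)) D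
        ≤ dist ((WithLp.equiv 2 (Fin n → ℝ)).symm (x k))
            ((WithLp.toLp 2 fun _ => m) : EuclideanSpace ℝ (Fin n)) := h1
      _ = Real.sqrt (∑ i, (x k i - m)^2) := h2
      _ ≤ Real.sqrt (∑ i, d i * (x k i - m)^2) := h3
  have hbound2 : ∀ k, Metric.infDist ((WithLp.equiv 2 (Fin n → ℝ)).symm (x k)) D
      ≤ (γ * F)^k * Real.sqrt (∑ i, d i * (x 0 i - (∑ i, d i * x 0 i)/(∑ i, d i))^2) := by
    intro k
    refine le_trans (hdist k) ?_
    have h1 := Real.sqrt_le_sqrt (hWk k)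
    refine le_trans h1 ?_
    rw [Real.sqrt_mul (by positivity)]
    have h2 : Real.sqrt (((γ * F)^2)^k) = (γ * F)^k := by
      rw [← pow_mul, mul_comm 2 k, pow_mul, Real.sqrt_sq (pow_nonneg hγFnn k)]
    rw [h2]
  have htend : Filter.Tendsto (fun k => (γ * F)^k
      * Real.sqrt (∑ i, d i * (x 0 i - (∑ i, d i * x 0 i)/(∑ i, d i))^2))
      Filter.atTop (nhds 0) := by
    have h := (tendsto_pow_atTop_nhds_zero_of_lt_one hγFnn hγF).mul_const
      (Real.sqrt (∑ i, d i * (x 0 i - (∑ i, d i * x 0 i)/(∑ i, d i))^2))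
    simpa using h
  exact squeeze_zero (fun k => Metric.infDist_nonneg) hbound2 htend
end

section
/- For the cycle graph on n vertices, the ratio of the largest to the smallest positive eigenvalue of the normalized Laplacian satisfies λ_max/λ_min ≥ n²/π² for all n ≥ 3; in particular, for F > 1 fixed, the synchronization condition λ_max/λ_min < 1 + 1/F fails for all sufficiently large n. -/
open Real

/-- For the cycle graph on `n ≥ 3` vertices (with `λ_min = 1 - cos (2π/n)` and
`λ_max = 2` for even `n`, `1 + cos (π/n)` for odd `n`), the eigenvalue ratio
satisfies `λ_max / λ_min ≥ n²/π²`; in particular, for any fixed `F > 1` the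
synchronization condition `λ_max / λ_min < 1 + 1/F` fails for all sufficiently
large `n`. -/
theorem cycle_eigenvalue_ratio_large :
    (∀ n : ℕ, 3 ≤ n →
      (n : ℝ) ^ 2 / π ^ 2 ≤
        (if Even n then 2 else 1 + Real.cos (π / n)) / (1 - Real.cos (2 * π / n))) ∧
    ∀ F : ℝ, 1 < F → ∃ N : ℕ, ∀ n : ℕ, N ≤ n → 3 ≤ n →
      ¬ ((if Even n then 2 else 1 + Real.cos (π / n)) / (1 - Real.cos (2 * π / n))
          < 1 + 1 / F) := by
  have hπ := Real.pi_pos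
  have key : ∀ n : ℕ, 3 ≤ n →
      (n : ℝ) ^ 2 / π ^ 2 ≤
        (if Even n then 2 else 1 + Real.cos (π / n)) / (1 - Real.cos (2 * π / n)) := by
    intro n hn
    have hn0 : (0:ℝ) < n := by exact_mod_cast Nat.lt_of_lt_of_le (by norm_num) hn
    have hn3 : (3:ℝ) ≤ n := by exact_mod_cast hn
    set c := Real.cos (π / n) with hc
    have hx : 0 < π / n := div_pos hπ hn0
    have hxπ : π / n ≤ π := by
      rw [div_le_iff₀ hn0]; nlinarith
    have hc1 : c < 1 := by
      have := Real.cos_lt_cos_of_nonneg_of_le_pi le_rfl hxπ hx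
      simpa using this
    have hchalf : (1:ℝ)/2 ≤ c := by
      have h3 : π / n ≤ π / 3 := by
        apply div_le_div_of_nonneg_left hπ.le (by norm_num) hn3
      have := Real.cos_le_cos_of_nonneg_of_le_pi hx.le (by linarith) h3
      rwa [Real.cos_pi_div_three] at this
    have hcos2 : Real.cos (2 * π / n) = 2 * c ^ 2 - 1 := by
      have h2 : 2 * π / n = 2 * (π / n) := by ring
      rw [h2, Real.cos_two_mul]
    have hmin : 1 - Real.cos (2 * π / n) = 2 * (1 - c) * (1 + c) := by
      rw [hcos2]; ring
    have hbound : 1 - c ≤ (π / n) ^ 2 / 2 := by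
      have := Real.one_sub_sq_div_two_le_cos (x := π / n)
      linarith
    have hbound' : 1 - c ≤ π ^ 2 / (2 * n ^ 2) := by
      have : (π / n) ^ 2 / 2 = π ^ 2 / (2 * n ^ 2) := by
        field_simp
      linarith [this ▸ hbound]
    have hminpos : 0 < 2 * (1 - c) * (1 + c) := by nlinarith
    have hπ2 : (0:ℝ) < π ^ 2 := by positivity
    have hn2 : (0:ℝ) < (n:ℝ) ^ 2 := by positivity
    have hkey : (n:ℝ) ^ 2 * (1 - c) ≤ π ^ 2 / 2 := by
      have h := mul_le_mul_of_nonneg_left hbound' hn2.le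
      have heq : (n:ℝ) ^ 2 * (π ^ 2 / (2 * (n:ℝ) ^ 2)) = π ^ 2 / 2 := by
        field_simp
      linarith [heq ▸ h]
    have hkey2 : (n:ℝ) ^ 2 * (1 - c) * (1 + c) ≤ π ^ 2 / 2 * (1 + c) :=
      mul_le_mul_of_nonneg_right hkey (by linarith)
    split_ifs
    · rw [hmin, le_div_iff₀ hminpos, div_mul_eq_mul_div, div_le_iff₀ hπ2]
      nlinarith
    · rw [hmin, le_div_iff₀ hminpos, div_mul_eq_mul_div, div_le_iff₀ hπ2]
      nlinarith
  refine ⟨key, ?_⟩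
  intro F hF
  refine ⟨5, fun n hN hn3 => ?_⟩
  have h1 := key n hn3
  have hn5 : (5:ℝ) ≤ n := by exact_mod_cast hN
  have hπ2 : (0:ℝ) < π ^ 2 := by positivity
  have hpl : π < 3.15 := Real.pi_lt_d2
  have h2 : (2:ℝ) ≤ (n:ℝ) ^ 2 / π ^ 2 := by
    rw [le_div_iff₀ hπ2]; nlinarith
  have hFinv : 1 / F < 1 := by
    rw [div_lt_one (by linarith)]; exact hF
  push_neg
  linarith
end
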